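/- Let g be a Lie algebra on basis e₁,…,e_n (i ∈ {5,…,n}) with only possibly nonzero structure constants C²₁₄, C²₁ᵢ, C²₁₃, Cⁱ₁₃, C⁴₁ᵢ, C²₃ᵢ, C⁴₁₃, C⁴₃ᵢ. Then: (1) the Jacobi identity is equivalent to C²₁₄·C⁴₃ᵢ = 0 for all i; (2) g is nilpotent, at most 4-step; (3) if C²₁₄ = 0, then g is at most 3-step nilpotent. -/

import Mathlib

set_option maxHeartbeats 4000000 in
/-- Ricci-flat class, case [3/4,1/2]. Let the antisymmetric bracket
`μ` on an `n`-dimensional space with basis `e₁,…,e_n` (`b 0 = e₁`, …, `b 3 = e₄`,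
`b i = e_{i+1}` for `i ≥ 4`) have only the possibly nonzero structure constants
`C²₁₄, C²₁ᵢ, C²₁₃, Cⁱ₁₃, C⁴₁ᵢ, C²₃ᵢ, C⁴₁₃, C⁴₃ᵢ`. Then (1) the Jacobi identity holds
iff `C²₁₄ · C⁴₃ᵢ = 0` for all `i`; (2) the algebra is at most 4-step nilpotent;
(3) if `C²₁₄ = 0` it is at most 3-step nilpotent. -/
theorem ricci_flat_class_nilpotent
    (n : ℕ) (hn : 4 ≤ n) (V : Type*) [AddCommGroup V] [Module ℝ V]
    (b : Module.Basis (Fin n) ℝ V)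
    (μ : V →ₗ[ℝ] V →ₗ[ℝ] V)
    (halt : ∀ x y : V, μ x y = - μ y x)
    (c214 c213 c413 : ℝ) (ci13 c21 c41 c23 c43 : Fin n → ℝ)
    (h13 : μ (b ⟨0, by omega⟩) (b ⟨2, by omega⟩) =
      c213 • b ⟨1, by omega⟩ + c413 • b ⟨3, by omega⟩ +
        ∑ i ∈ Finset.univ.filter (fun i : Fin n => 4 ≤ (i : ℕ)), ci13 i • b i)
    (h14 : μ (b ⟨0, by omega⟩) (b ⟨3, by omega⟩) = c214 • b ⟨1, by omega⟩)
    (h1i : ∀ i : Fin n, 4 ≤ (i : ℕ) →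
      μ (b ⟨0, by omega⟩) (b i) = c21 i • b ⟨1, by omega⟩ + c41 i • b ⟨3, by omega⟩)
    (h3i : ∀ i : Fin n, 4 ≤ (i : ℕ) →
      μ (b ⟨2, by omega⟩) (b i) = c23 i • b ⟨1, by omega⟩ + c43 i • b ⟨3, by omega⟩)
    (h12 : μ (b ⟨0, by omega⟩) (b ⟨1, by omega⟩) = 0)
    (h23 : μ (b ⟨1, by omega⟩) (b ⟨2, by omega⟩) = 0)
    (h24 : μ (b ⟨1, by omega⟩) (b ⟨3, by omega⟩) = 0)
    (h2i : ∀ i : Fin n, 4 ≤ (i : ℕ) → μ (b ⟨1, by omega⟩) (b i) = 0)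
    (h34 : μ (b ⟨2, by omega⟩) (b ⟨3, by omega⟩) = 0)
    (h4i : ∀ i : Fin n, 4 ≤ (i : ℕ) → μ (b ⟨3, by omega⟩) (b i) = 0)
    (hij : ∀ i j : Fin n, 4 ≤ (i : ℕ) → 4 ≤ (j : ℕ) → μ (b i) (b j) = 0) :
    ((∀ x y z : V, μ x (μ y z) + μ y (μ z x) + μ z (μ x y) = 0) ↔
      (∀ i : Fin n, 4 ≤ (i : ℕ) → c214 * c43 i = 0)) ∧
    (∀ x1 x2 x3 x4 x5 : V, μ x1 (μ x2 (μ x3 (μ x4 x5))) = 0) ∧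
    (c214 = 0 → ∀ x1 x2 x3 x4 : V, μ x1 (μ x2 (μ x3 x4)) = 0) := by
  have p0 : 0 < n := by omega
  have p1 : 1 < n := by omega
  have p2 : 2 < n := by omega
  have p3 : 3 < n := by omega
  have hsq : ∀ x : V, μ x x = 0 := by
    intro x
    have h : (2:ℝ) • μ x x = 0 := by
      rw [two_smul]
      nth_rewrite 2 [halt x x]
      exact add_neg_cancel _
    rcases smul_eq_zero.mp h with h2 | h2
    · norm_num at h2
    · exact h2
  have hext : ∀ (f : V →ₗ[ℝ] V) (W : Submodule ℝ V),
      (∀ i, f (b i) ∈ W) → ∀ x, f x ∈ W := by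
    intro f W h x
    have hle : Submodule.span ℝ (Set.range b) ≤ W.comap f := by
      rw [Submodule.span_le]
      rintro _ ⟨i, rfl⟩
      exact h i
    rw [b.span_eq] at hle
    exact hle Submodule.mem_top
  have hcls : ∀ j : Fin n, j = ⟨0,p0⟩ ∨ j = ⟨1,p1⟩ ∨ j = ⟨2,p2⟩ ∨ j = ⟨3,p3⟩ ∨ 4 ≤ (j:ℕ) := by
    intro j
    by_cases h4 : 4 ≤ (j:ℕ)
    · exact Or.inr (Or.inr (Or.inr (Or.inr h4)))
    · have h : (j:ℕ) = 0 ∨ (j:ℕ) = 1 ∨ (j:ℕ) = 2 ∨ (j:ℕ) = 3 := by omega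
      rcases h with h|h|h|h
      · exact Or.inl (Fin.ext h)
      · exact Or.inr (Or.inl (Fin.ext h))
      · exact Or.inr (Or.inr (Or.inl (Fin.ext h)))
      · exact Or.inr (Or.inr (Or.inr (Or.inl (Fin.ext h))))
  have hc : ∀ y : V, μ (b ⟨1,p1⟩) y = 0 := by
    have h0 : μ (b ⟨1,p1⟩) = 0 := by
      refine b.ext fun i => ?_
      rcases hcls i with rfl|rfl|rfl|rfl|hi
      · show μ _ _ = _
        rw [halt _ _, h12, neg_zero]; rfl
      · show μ _ _ = _
        rw [hsq]; rfl
      · show μ _ _ = _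
        rw [h23]; rfl
      · show μ _ _ = _
        rw [h24]; rfl
      · show μ _ _ = _
        rw [h2i i hi]; rfl
    intro y; rw [h0]; rfl
  have hc' : ∀ y : V, μ y (b ⟨1,p1⟩) = 0 := fun y => by rw [halt _ _, hc, neg_zero]
  have t20 : μ (b ⟨2,p2⟩) (b ⟨0,p0⟩) = -(μ (b ⟨0,p0⟩) (b ⟨2,p2⟩)) := halt _ _
  have t30 : μ (b ⟨3,p3⟩) (b ⟨0,p0⟩) = -(c214 • b ⟨1,p1⟩) := by rw [halt _ _, h14]
  have t32 : μ (b ⟨3,p3⟩) (b ⟨2,p2⟩) = 0 := by rw [halt _ _, h34, neg_zero]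
  have ti0 : ∀ j : Fin n, 4 ≤ (j:ℕ) →
      μ (b j) (b ⟨0,p0⟩) = -(c21 j • b ⟨1,p1⟩ + c41 j • b ⟨3,p3⟩) := fun j hj => by
    rw [halt _ _, h1i j hj]
  have ti2 : ∀ j : Fin n, 4 ≤ (j:ℕ) →
      μ (b j) (b ⟨2,p2⟩) = -(c23 j • b ⟨1,p1⟩ + c43 j • b ⟨3,p3⟩) := fun j hj => by
    rw [halt _ _, h3i j hj]
  have ti3 : ∀ j : Fin n, 4 ≤ (j:ℕ) → μ (b j) (b ⟨3,p3⟩) = 0 := fun j hj => by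
    rw [halt _ _, h4i j hj, neg_zero]
  have L3 : μ (b ⟨3,p3⟩) (μ (b ⟨0,p0⟩) (b ⟨2,p2⟩)) = 0 := by
    rw [h13, map_add, map_add, map_smul, map_smul, map_sum, hc' _, hsq _]
    simp only [smul_zero, zero_add, add_zero]
    refine Finset.sum_eq_zero fun i hi => ?_
    have h4 : 4 ≤ (i:ℕ) := (Finset.mem_filter.mp hi).2
    rw [map_smul, h4i i h4, smul_zero]
  have LJ : ∀ j : Fin n, 4 ≤ (j:ℕ) → μ (b j) (μ (b ⟨0,p0⟩) (b ⟨2,p2⟩)) = 0 := by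
    intro j hj
    rw [h13, map_add, map_add, map_smul, map_smul, map_sum, hc' _, ti3 j hj]
    simp only [smul_zero, zero_add, add_zero]
    refine Finset.sum_eq_zero fun i hi => ?_
    have h4 : 4 ≤ (i:ℕ) := (Finset.mem_filter.mp hi).2
    rw [map_smul, hij j i hj h4, smul_zero]
  -- membership lemmas for W1
  have m1 : b ⟨1,p1⟩ ∈ Submodule.span ℝ (({b ⟨1,p1⟩, b ⟨3,p3⟩} : Set V) ∪ {v | ∃ j : Fin n, 4 ≤ (j:ℕ) ∧ v = b j}) :=
    Submodule.subset_span (Or.inl (Set.mem_insert _ _))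
  have m3 : b ⟨3,p3⟩ ∈ Submodule.span ℝ (({b ⟨1,p1⟩, b ⟨3,p3⟩} : Set V) ∪ {v | ∃ j : Fin n, 4 ≤ (j:ℕ) ∧ v = b j}) :=
    Submodule.subset_span (Or.inl (Set.mem_insert_iff.mpr (Or.inr rfl)))
  have mi : ∀ j : Fin n, 4 ≤ (j:ℕ) → b j ∈ Submodule.span ℝ (({b ⟨1,p1⟩, b ⟨3,p3⟩} : Set V) ∪ {v | ∃ j : Fin n, 4 ≤ (j:ℕ) ∧ v = b j}) :=
    fun j hj => Submodule.subset_span (Or.inr ⟨j, hj, rfl⟩)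
  have mcomb : ∀ a c : ℝ, a • b ⟨1,p1⟩ + c • b ⟨3,p3⟩ ∈ Submodule.span ℝ (({b ⟨1,p1⟩, b ⟨3,p3⟩} : Set V) ∪ {v | ∃ j : Fin n, 4 ≤ (j:ℕ) ∧ v = b j}) :=
    fun a c => add_mem (Submodule.smul_mem _ _ m1) (Submodule.smul_mem _ _ m3)
  have st1b : ∀ i j : Fin n, μ (b i) (b j) ∈ Submodule.span ℝ (({b ⟨1,p1⟩, b ⟨3,p3⟩} : Set V) ∪ {v | ∃ j : Fin n, 4 ≤ (j:ℕ) ∧ v = b j}) := by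
    have mX : c213 • b ⟨1,p1⟩ + c413 • b ⟨3,p3⟩ +
        (∑ i ∈ Finset.univ.filter (fun i : Fin n => 4 ≤ (i : ℕ)), ci13 i • b i) ∈
        Submodule.span ℝ (({b ⟨1,p1⟩, b ⟨3,p3⟩} : Set V) ∪ {v | ∃ j : Fin n, 4 ≤ (j:ℕ) ∧ v = b j}) :=
      add_mem (mcomb _ _) (sum_mem fun t ht =>
        Submodule.smul_mem _ _ (mi t (Finset.mem_filter.mp ht).2))
    intro i j
    rcases hcls i with rfl|rfl|rfl|rfl|hi
    · rcases hcls j with rfl|rfl|rfl|rfl|hj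
      · rw [hsq]; exact zero_mem _
      · rw [h12]; exact zero_mem _
      · rw [h13]; exact mX
      · rw [h14]; exact Submodule.smul_mem _ _ m1
      · rw [h1i j hj]; exact mcomb _ _
    · rw [hc]; exact zero_mem _
    · rcases hcls j with rfl|rfl|rfl|rfl|hj
      · rw [t20, h13]; exact neg_mem mX
      · rw [hc']; exact zero_mem _
      · rw [hsq]; exact zero_mem _
      · rw [h34]; exact zero_mem _
      · rw [h3i j hj]; exact mcomb _ _
    · rcases hcls j with rfl|rfl|rfl|rfl|hj
      · rw [t30]; exact neg_mem (Submodule.smul_mem _ _ m1)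
      · rw [hc']; exact zero_mem _
      · rw [t32]; exact zero_mem _
      · rw [hsq]; exact zero_mem _
      · rw [h4i j hj]; exact zero_mem _
    · rcases hcls j with rfl|rfl|rfl|rfl|hj
      · rw [ti0 i hi]; exact neg_mem (mcomb _ _)
      · rw [hc']; exact zero_mem _
      · rw [ti2 i hi]; exact neg_mem (mcomb _ _)
      · rw [ti3 i hi]; exact zero_mem _
      · rw [hij i j hi hj]; exact zero_mem _
  have st1 : ∀ x y : V, μ x y ∈ Submodule.span ℝ (({b ⟨1,p1⟩, b ⟨3,p3⟩} : Set V) ∪ {v | ∃ j : Fin n, 4 ≤ (j:ℕ) ∧ v = b j}) := by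
    intro x y
    have hA : ∀ j : Fin n, ∀ x : V, μ x (b j) ∈ Submodule.span ℝ (({b ⟨1,p1⟩, b ⟨3,p3⟩} : Set V) ∪ {v | ∃ j : Fin n, 4 ≤ (j:ℕ) ∧ v = b j}) :=
      fun j => hext (μ.flip (b j)) _ (fun i => st1b i j)
    exact hext (μ x) _ (fun j => hA j x) y
  -- brackets with W1 land in W2 = span {e1, e3}
  have m1' : b ⟨1,p1⟩ ∈ Submodule.span ℝ ({b ⟨1,p1⟩, b ⟨3,p3⟩} : Set V) :=
    Submodule.subset_span (Set.mem_insert _ _)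
  have m3' : b ⟨3,p3⟩ ∈ Submodule.span ℝ ({b ⟨1,p1⟩, b ⟨3,p3⟩} : Set V) :=
    Submodule.subset_span (Set.mem_insert_iff.mpr (Or.inr rfl))
  have ge3 : ∀ x : V, μ x (b ⟨3,p3⟩) ∈ Submodule.span ℝ ({b ⟨1,p1⟩, b ⟨3,p3⟩} : Set V) := by
    refine hext (μ.flip (b ⟨3,p3⟩)) _ fun i => ?_
    show μ (b i) (b ⟨3,p3⟩) ∈ _
    rcases hcls i with rfl|rfl|rfl|rfl|hi
    · rw [h14]; exact Submodule.smul_mem _ _ m1'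
    · rw [hc]; exact zero_mem _
    · rw [h34]; exact zero_mem _
    · rw [hsq]; exact zero_mem _
    · rw [ti3 i hi]; exact zero_mem _
  have gei : ∀ j : Fin n, 4 ≤ (j:ℕ) → ∀ x : V,
      μ x (b j) ∈ Submodule.span ℝ ({b ⟨1,p1⟩, b ⟨3,p3⟩} : Set V) := by
    intro j hj
    refine hext (μ.flip (b j)) _ fun i => ?_
    show μ (b i) (b j) ∈ _
    rcases hcls i with rfl|rfl|rfl|rfl|hi
    · rw [h1i j hj]
      exact add_mem (Submodule.smul_mem _ _ m1') (Submodule.smul_mem _ _ m3')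
    · rw [hc]; exact zero_mem _
    · rw [h3i j hj]
      exact add_mem (Submodule.smul_mem _ _ m1') (Submodule.smul_mem _ _ m3')
    · rw [h4i j hj]; exact zero_mem _
    · rw [hij i j hi hj]; exact zero_mem _
  have st2 : ∀ (x : V) (w : V),
      w ∈ Submodule.span ℝ (({b ⟨1,p1⟩, b ⟨3,p3⟩} : Set V) ∪ {v | ∃ j : Fin n, 4 ≤ (j:ℕ) ∧ v = b j}) →
      μ x w ∈ Submodule.span ℝ ({b ⟨1,p1⟩, b ⟨3,p3⟩} : Set V) := by
    intro x w hw
    have hle : Submodule.span ℝ (({b ⟨1,p1⟩, b ⟨3,p3⟩} : Set V) ∪ {v | ∃ j : Fin n, 4 ≤ (j:ℕ) ∧ v = b j}) ≤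
        (Submodule.span ℝ ({b ⟨1,p1⟩, b ⟨3,p3⟩} : Set V)).comap (μ x) := by
      rw [Submodule.span_le]
      rintro v (hv | ⟨j, hj, rfl⟩)
      · rcases hv with rfl | hv
        · exact Submodule.mem_comap.mpr (by rw [hc']; exact zero_mem _)
        · rcases hv with rfl
          exact Submodule.mem_comap.mpr (ge3 x)
      · exact Submodule.mem_comap.mpr (gei j hj x)
    exact hle hw
  have ge3' : ∀ x : V, μ x (b ⟨3,p3⟩) ∈ Submodule.span ℝ ({b ⟨1,p1⟩} : Set V) := by
    refine hext (μ.flip (b ⟨3,p3⟩)) _ fun i => ?_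
    show μ (b i) (b ⟨3,p3⟩) ∈ _
    rcases hcls i with rfl|rfl|rfl|rfl|hi
    · rw [h14]; exact Submodule.smul_mem _ _ (Submodule.subset_span rfl)
    · rw [hc]; exact zero_mem _
    · rw [h34]; exact zero_mem _
    · rw [hsq]; exact zero_mem _
    · rw [ti3 i hi]; exact zero_mem _
  have st3 : ∀ (x : V) (w : V), w ∈ Submodule.span ℝ ({b ⟨1,p1⟩, b ⟨3,p3⟩} : Set V) →
      μ x w ∈ Submodule.span ℝ ({b ⟨1,p1⟩} : Set V) := by
    intro x w hw
    have hle : Submodule.span ℝ ({b ⟨1,p1⟩, b ⟨3,p3⟩} : Set V) ≤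
        (Submodule.span ℝ ({b ⟨1,p1⟩} : Set V)).comap (μ x) := by
      rw [Submodule.span_le]
      rintro v (rfl | hv)
      · exact Submodule.mem_comap.mpr (by rw [hc']; exact zero_mem _)
      · rcases hv with rfl
        exact Submodule.mem_comap.mpr (ge3' x)
    exact hle hw
  have st4 : ∀ (x : V) (w : V), w ∈ Submodule.span ℝ ({b ⟨1,p1⟩} : Set V) → μ x w = 0 := by
    intro x w hw
    have hle : Submodule.span ℝ ({b ⟨1,p1⟩} : Set V) ≤ (⊥ : Submodule ℝ V).comap (μ x) := by
      rw [Submodule.span_le]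
      rintro v rfl
      exact Submodule.mem_comap.mpr (by rw [hc']; exact zero_mem _)
    exact (Submodule.mem_bot ℝ).mp (hle hw)
  refine ⟨⟨?_, ?_⟩, ?_, ?_⟩
  · -- forward: Jacobi implies conditions
    intro hJ i hi
    have h := hJ (b ⟨0,p0⟩) (b ⟨2,p2⟩) (b i)
    rw [h3i i hi, ti0 i hi, LJ i hi, map_add, map_smul, map_smul, map_neg, map_add,
      map_smul, map_smul, h12, h14, hc' _, h34] at h
    simp only [smul_zero, zero_add, add_zero, neg_zero] at h
    rw [smul_smul] at h
    rcases smul_eq_zero.mp h with h0 | h0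
    · rw [mul_comm] at h0; exact h0
    · exact absurd h0 (b.ne_zero _)
  · -- backward: conditions imply Jacobi
    intro hz x y z
    have k1 : ∀ j : Fin n, 4 ≤ (j:ℕ) → c43 j • c214 • b ⟨1,p1⟩ = 0 := fun j hj => by
      rw [smul_smul, mul_comm, hz j hj, zero_smul]
    have k2 : ∀ j : Fin n, 4 ≤ (j:ℕ) → (c43 j * c214) • b ⟨1,p1⟩ = 0 := fun j hj => by
      rw [mul_comm, hz j hj, zero_smul]
    have k3 : ∀ j : Fin n, 4 ≤ (j:ℕ) → (c214 * c43 j) • b ⟨1,p1⟩ = 0 := fun j hj => by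
      rw [hz j hj, zero_smul]
    have Jb : ∀ i j k : Fin n,
        μ (b i) (μ (b j) (b k)) + μ (b j) (μ (b k) (b i)) + μ (b k) (μ (b i) (b j)) = 0 := by
      intro i j k
      clear hext st1 st2 st3 st4 st1b ge3 gei ge3' mcomb m1 m3 mi m1' m3' hz x y z
      rcases hcls i with rfl|rfl|rfl|rfl|hi <;>
      rcases hcls j with rfl|rfl|rfl|rfl|hj <;>
      rcases hcls k with rfl|rfl|rfl|rfl|hk <;>
      · clear halt h13 hcls
        simp [*, hsq, hc, hc', t20, t30, t32, ti0, ti2, ti3, L3, LJ, k1, k2, k3]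
    have s1 : ∀ (j k : Fin n) (x : V),
        μ x (μ (b j) (b k)) + μ (b j) (μ (b k) x) + μ (b k) (μ x (b j)) = 0 := by
      intro j k x
      have hb : ∀ i, (μ.flip (μ (b j) (b k)) + (μ (b j)).comp (μ (b k)) +
          (μ (b k)).comp (μ.flip (b j))) (b i) ∈ (⊥ : Submodule ℝ V) := by
        intro i
        simp only [LinearMap.add_apply, LinearMap.comp_apply, LinearMap.flip_apply,
          Submodule.mem_bot]
        exact Jb i j k
      have h := hext _ _ hb x
      simpa only [LinearMap.add_apply, LinearMap.comp_apply, LinearMap.flip_apply,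
        Submodule.mem_bot] using h
    have s2 : ∀ (k : Fin n) (x y : V),
        μ x (μ y (b k)) + μ y (μ (b k) x) + μ (b k) (μ x y) = 0 := by
      intro k x y
      have hb : ∀ j, ((μ x).comp (μ.flip (b k)) + μ.flip (μ (b k) x) +
          (μ (b k)).comp (μ x)) (b j) ∈ (⊥ : Submodule ℝ V) := by
        intro j
        simp only [LinearMap.add_apply, LinearMap.comp_apply, LinearMap.flip_apply,
          Submodule.mem_bot]
        exact s1 j k x
      have h := hext _ _ hb y
      simpa only [LinearMap.add_apply, LinearMap.comp_apply, LinearMap.flip_apply,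
        Submodule.mem_bot] using h
    have s3 : ∀ (x y z : V), μ x (μ y z) + μ y (μ z x) + μ z (μ x y) = 0 := by
      intro x y z
      have hb : ∀ k, ((μ x).comp (μ y) + (μ y).comp (μ.flip x) +
          μ.flip (μ x y)) (b k) ∈ (⊥ : Submodule ℝ V) := by
        intro k
        simp only [LinearMap.add_apply, LinearMap.comp_apply, LinearMap.flip_apply,
          Submodule.mem_bot]
        exact s2 k x y
      have h := hext _ _ hb z
      simpa only [LinearMap.add_apply, LinearMap.comp_apply, LinearMap.flip_apply,
        Submodule.mem_bot] using h
    exact s3 x y z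
  · -- 4-step nilpotent
    intro x1 x2 x3 x4 x5
    exact st4 x1 _ (st3 x2 _ (st2 x3 _ (st1 x4 x5)))
  · -- 3-step if c214 = 0
    intro hc214 x1 x2 x3 x4
    have ge3z : ∀ x : V, μ x (b ⟨3,p3⟩) = 0 := by
      intro x
      refine (Submodule.mem_bot ℝ).mp (hext (μ.flip (b ⟨3,p3⟩)) ⊥ (fun i => ?_) x)
      show μ (b i) (b ⟨3,p3⟩) ∈ _
      rcases hcls i with rfl|rfl|rfl|rfl|hi
      · rw [h14, hc214, zero_smul]; exact zero_mem _
      · rw [hc]; exact zero_mem _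
      · rw [h34]; exact zero_mem _
      · rw [hsq]; exact zero_mem _
      · rw [ti3 i hi]; exact zero_mem _
    have st3z : ∀ (x : V) (w : V), w ∈ Submodule.span ℝ ({b ⟨1,p1⟩, b ⟨3,p3⟩} : Set V) →
        μ x w = 0 := by
      intro x w hw
      have hle : Submodule.span ℝ ({b ⟨1,p1⟩, b ⟨3,p3⟩} : Set V) ≤
          (⊥ : Submodule ℝ V).comap (μ x) := by
        rw [Submodule.span_le]
        rintro v (rfl | hv)
        · exact Submodule.mem_comap.mpr (by rw [hc']; exact zero_mem _)
        · rcases hv with rfl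
          exact Submodule.mem_comap.mpr (by rw [ge3z]; exact zero_mem _)
      exact (Submodule.mem_bot ℝ).mp (hle hw)
    exact st3z x1 _ (st2 x2 _ (st1 x3 x4))
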